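/- The minimal Toda form factor is normalized at infinity, F^T(∞) = 1: for every fixed real y with 0 < y < 2π, the limit of F^T(x + iy) as the real number x tends to +∞ exists and equals 1. -/

import Mathlib

open Complex MeasureTheory Topology Filter

/-- The integrand of the minimal form factor of the affine `A_{N−1}`-Toda model. -/
noncomputable def fT (N : ℕ) (B : ℝ) (θ : ℂ) (t : ℝ) : ℂ :=
  (1 / (t : ℂ)) *
    (-4 * Complex.sinh ((t : ℂ) * (N - 1) / N) * Complex.sinh ((t : ℂ) * (B : ℂ) / (2 * N)) *
      Complex.sinh ((t : ℂ) * (2 - (B : ℂ)) / (2 * N)) / (Complex.sinh (t : ℂ)) ^ 2) *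
    Complex.cosh ((t : ℂ) * (1 - θ / (I * (Real.pi : ℂ))))

/-- The minimal form factor of the affine `A_{N−1}`-Toda model. -/
noncomputable def FT (N : ℕ) (B : ℝ) (θ : ℂ) : ℂ :=
  Complex.exp (∫ t in Set.Ioi (0 : ℝ), fT N B θ t)

section AUX
open Set

/-- Real version of the `θ`-independent prefactor in `fT`. -/
noncomputable def gR (N : ℕ) (B : ℝ) (t : ℝ) : ℝ :=
  (1 / t) *
    (-4 * Real.sinh (t * ((N : ℝ) - 1) / N) * Real.sinh (t * B / (2 * N)) *
      Real.sinh (t * (2 - B) / (2 * N)) / (Real.sinh t) ^ 2)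

lemma sinh_le_mul_exp' {x : ℝ} (hx : 0 ≤ x) : Real.sinh x ≤ x * Real.exp x := by
  clear hx
  rw [Real.sinh_eq]
  have h1 : Real.exp (-x) * Real.exp x = 1 := by rw [← Real.exp_add]; simp
  have h2 : (-(2*x)) + 1 ≤ Real.exp (-(2*x)) := Real.add_one_le_exp _
  have h3 : Real.exp (-(2*x)) = Real.exp (-x) * Real.exp (-x) := by
    rw [← Real.exp_add]; ring_nf
  nlinarith [Real.exp_pos x, Real.exp_pos (-x)]

lemma exp_quarter_le_sinh' {x : ℝ} (hx : 1 ≤ x) : Real.exp x / 4 ≤ Real.sinh x := by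
  rw [Real.sinh_eq]
  have h1 : Real.exp (-x) ≤ 1 := Real.exp_le_one_iff.mpr (by linarith)
  have h2 : (2:ℝ) ≤ Real.exp x := by have := Real.add_one_le_exp x; linarith
  nlinarith

lemma sinh_le_exp_half' {x : ℝ} : Real.sinh x ≤ Real.exp x / 2 := by
  rw [Real.sinh_eq]
  have := Real.exp_pos (-x); linarith

lemma cosh_eq'' (z : ℂ) : Complex.cosh z = (Complex.exp z + Complex.exp (-z)) / 2 := by
  rw [eq_div_iff (two_ne_zero' ℂ), mul_comm, Complex.two_cosh]

/-- Pointwise decomposition of `fT` into two oscillating pieces. -/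
lemma fT_key (N : ℕ) (B : ℝ) (x y t : ℝ) :
    fT N B ((x : ℂ) + (y : ℂ) * I) t =
      ((gR N B t * Real.exp (t * (1 - y / Real.pi)) : ℝ) : ℂ) *
          Complex.exp (((t * (x / Real.pi) : ℝ) : ℂ) * I) / 2 +
        ((gR N B t * Real.exp (-(t * (1 - y / Real.pi))) : ℝ) : ℂ) *
          Complex.exp (-(((t * (x / Real.pi) : ℝ) : ℂ) * I)) / 2 := by
  have hπ : (Real.pi : ℂ) ≠ 0 := Complex.ofReal_ne_zero.mpr Real.pi_ne_zero
  have harg : (t : ℂ) * (1 - ((x : ℂ) + (y : ℂ) * I) / (I * (Real.pi : ℂ)))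
      = ((t * (1 - y / Real.pi) : ℝ) : ℂ) + ((t * (x / Real.pi) : ℝ) : ℂ) * I := by
    push_cast
    field_simp
    ring_nf
    simp [Complex.I_sq]
    ring
  unfold fT gR
  rw [harg, cosh_eq'']
  rw [Complex.exp_add, neg_add, Complex.exp_add]
  push_cast [Complex.ofReal_sinh, Complex.ofReal_exp]
  ring

lemma gR_measurable (N : ℕ) (B : ℝ) : Measurable (gR N B) := by
  unfold gR; fun_prop

variable {N : ℕ} {B : ℝ} (hN : 2 ≤ N) (hB0 : 0 < B) (hB2 : B < 2)
include hN hB0 hB2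

lemma gR_abs (t : ℝ) (ht : 0 < t) :
    |gR N B t| = 4 * Real.sinh (t * ((N : ℝ) - 1) / N) * Real.sinh (t * B / (2 * N)) *
      Real.sinh (t * (2 - B) / (2 * N)) / (t * (Real.sinh t) ^ 2) := by
  have hN1 : (1:ℝ) ≤ (N:ℝ) := by exact_mod_cast Nat.one_le_of_lt hN
  have hNpos : (0:ℝ) < N := by linarith
  have h1 : 0 < t * ((N : ℝ) - 1) / N := by
    apply div_pos _ hNpos
    have : (1:ℝ) < (N:ℝ) := by exact_mod_cast hN
    nlinarith
  have h2 : 0 < t * B / (2 * N) := by positivity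
  have h3 : 0 < t * (2 - B) / (2 * N) := by
    apply div_pos (by nlinarith) (by positivity)
  have s1 := Real.sinh_pos_iff.mpr h1
  have s2 := Real.sinh_pos_iff.mpr h2
  have s3 := Real.sinh_pos_iff.mpr h3
  have st := Real.sinh_pos_iff.mpr ht
  have heq : gR N B t = -(4 * Real.sinh (t * ((N : ℝ) - 1) / N) * Real.sinh (t * B / (2 * N)) *
      Real.sinh (t * (2 - B) / (2 * N)) / (t * (Real.sinh t) ^ 2)) := by
    unfold gR
    field_simp
  rw [heq, abs_neg, abs_of_pos (by positivity)]

lemma gR_bound_small (t : ℝ) (ht0 : 0 < t) (ht1 : t ≤ 1) :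
    |gR N B t| ≤ 4 * Real.exp 1 ^ 3 := by
  have hN1 : (1:ℝ) < (N:ℝ) := by exact_mod_cast hN
  have hNpos : (0:ℝ) < N := by linarith
  have ha1 : 0 < ((N : ℝ) - 1) / N := by apply div_pos (by linarith) hNpos
  have ha1' : ((N : ℝ) - 1) / N ≤ 1 := by
    rw [div_le_one hNpos]; linarith
  have ha2 : 0 < B / (2 * N) := by positivity
  have ha2' : B / (2 * N) ≤ 1 := by
    rw [div_le_one (by positivity)]; nlinarith
  have ha3 : 0 < (2 - B) / (2 * N) := by apply div_pos (by linarith) (by positivity)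
  have ha3' : (2 - B) / (2 * N) ≤ 1 := by
    rw [div_le_one (by positivity)]; nlinarith
  rw [gR_abs hN hB0 hB2 t ht0]
  have key : ∀ a : ℝ, 0 < a → a ≤ 1 → Real.sinh (t * a) ≤ t * Real.exp 1 := by
    intro a ha ha'
    have h1 : Real.sinh (t * a) ≤ (t * a) * Real.exp (t * a) :=
      sinh_le_mul_exp' (by positivity)
    have h2 : Real.exp (t * a) ≤ Real.exp 1 := Real.exp_le_exp.mpr (by nlinarith)
    calc Real.sinh (t * a) ≤ (t * a) * Real.exp (t * a) := h1
      _ ≤ (t * 1) * Real.exp 1 := by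
          apply mul_le_mul _ h2 (Real.exp_pos _).le (by positivity)
          nlinarith
      _ = t * Real.exp 1 := by ring
  have k1 := key _ ha1 ha1'
  have k2 := key _ ha2 ha2'
  have k3 := key _ ha3 ha3'
  rw [← mul_div_assoc] at k1 k2 k3
  have hst : t ≤ Real.sinh t := (Real.self_lt_sinh_iff.mpr ht0).le
  have s1 : 0 < Real.sinh (t * ((N : ℝ) - 1) / N) :=
    Real.sinh_pos_iff.mpr (div_pos (by nlinarith) hNpos)
  have s2 : 0 < Real.sinh (t * B / (2 * N)) := Real.sinh_pos_iff.mpr (by positivity)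
  have s3 : 0 < Real.sinh (t * (2 - B) / (2 * N)) :=
    Real.sinh_pos_iff.mpr (div_pos (by nlinarith) (by positivity))
  calc 4 * Real.sinh (t * ((N:ℝ) - 1) / N) * Real.sinh (t * B / (2 * N)) *
        Real.sinh (t * (2 - B) / (2 * N)) / (t * Real.sinh t ^ 2)
      ≤ 4 * (t * Real.exp 1) * (t * Real.exp 1) * (t * Real.exp 1) / (t * t ^ 2) := by
        gcongr
    _ = 4 * Real.exp 1 ^ 3 := by
        have h3 : Real.exp 1 ^ 3 = Real.exp 3 := by
          rw [← Real.exp_nat_mul]; norm_num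
        field_simp

lemma gR_bound_large (t : ℝ) (ht : 1 ≤ t) :
    |gR N B t| ≤ 8 * Real.exp (-t) := by
  have hN1 : (1:ℝ) < (N:ℝ) := by exact_mod_cast hN
  have hNpos : (0:ℝ) < N := by linarith
  have ht0 : (0:ℝ) < t := by linarith
  rw [gR_abs hN hB0 hB2 t ht0]
  have hs : Real.exp t / 4 ≤ Real.sinh t := exp_quarter_le_sinh' ht
  have hst : 0 < Real.sinh t := Real.sinh_pos_iff.mpr ht0
  have s1 : 0 < Real.sinh (t * ((N:ℝ) - 1) / N) :=
    Real.sinh_pos_iff.mpr (by apply div_pos (by nlinarith) hNpos)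
  have s2 : 0 < Real.sinh (t * B / (2 * N)) := Real.sinh_pos_iff.mpr (by positivity)
  have s3 : 0 < Real.sinh (t * (2 - B) / (2 * N)) :=
    Real.sinh_pos_iff.mpr (by apply div_pos (by nlinarith) (by positivity))
  have hsum : t * ((N:ℝ) - 1) / N + t * B / (2 * N) + t * (2 - B) / (2 * N) = t := by
    field_simp
    ring
  calc 4 * Real.sinh (t * ((N:ℝ) - 1) / N) * Real.sinh (t * B / (2 * N)) *
        Real.sinh (t * (2 - B) / (2 * N)) / (t * Real.sinh t ^ 2)
      ≤ 4 * (Real.exp (t * ((N:ℝ) - 1) / N) / 2) * (Real.exp (t * B / (2 * N)) / 2) *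
        (Real.exp (t * (2 - B) / (2 * N)) / 2) / (1 * (Real.exp t / 4) ^ 2) := by
        gcongr
        all_goals first
          | positivity
          | exact sinh_le_exp_half'
          | exact ht
          | exact hs
    _ = 8 * (Real.exp (t * ((N:ℝ) - 1) / N) * Real.exp (t * B / (2 * N)) *
          Real.exp (t * (2 - B) / (2 * N))) / Real.exp t ^ 2 := by
        field_simp
        ring
    _ = 8 * Real.exp (-t) := by
        rw [← Real.exp_add, ← Real.exp_add, hsum]
        rw [Real.exp_neg, sq]
        field_simp

lemma integrable_gR_exp {r : ℝ} (hr : |r| < 1) :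
    IntegrableOn (fun t => gR N B t * Real.exp (t * r)) (Ioi 0) := by
  simp_rw [mul_comm _ r]
  have hm : Measurable (fun t => gR N B t * Real.exp (r * t)) :=
    (gR_measurable N B).mul (by fun_prop)
  have h1 : IntegrableOn (fun t => gR N B t * Real.exp (r * t)) (Ioc 0 1) := by
    apply Measure.integrableOn_of_bounded (M := 4 * Real.exp 1 ^ 3 * Real.exp 1)
      measure_Ioc_lt_top.ne hm.aestronglyMeasurable
    filter_upwards [ae_restrict_mem measurableSet_Ioc] with t ht
    rw [Real.norm_eq_abs, abs_mul, Real.abs_exp]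
    have h2 : Real.exp (r * t) ≤ Real.exp 1 := by
      apply Real.exp_le_exp.mpr
      have : r * t ≤ |r| * t := mul_le_mul_of_nonneg_right (le_abs_self r) ht.1.le
      nlinarith [abs_nonneg r, ht.1.le, ht.2]
    exact mul_le_mul (gR_bound_small hN hB0 hB2 t ht.1 ht.2) h2 (Real.exp_pos _).le
      (by positivity)
  have h2 : IntegrableOn (fun t => gR N B t * Real.exp (r * t)) (Ioi 1) := by
    have hint : IntegrableOn (fun t => 8 * Real.exp (-(1 - |r|) * t)) (Ioi 1) :=
      (exp_neg_integrableOn_Ioi 1 (by linarith)).const_mul 8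
    apply Integrable.mono' hint hm.aestronglyMeasurable
    filter_upwards [ae_restrict_mem measurableSet_Ioi] with t ht
    rw [Real.norm_eq_abs, abs_mul, Real.abs_exp]
    calc |gR N B t| * Real.exp (r * t) ≤ (8 * Real.exp (-t)) * Real.exp (|r| * t) := by
          apply mul_le_mul (gR_bound_large hN hB0 hB2 t ht.le) (Real.exp_le_exp.mpr ?_)
            (Real.exp_pos _).le (by positivity)
          exact mul_le_mul_of_nonneg_right (le_abs_self r) (by linarith [mem_Ioi.mp ht])
      _ = 8 * Real.exp (-(1 - |r|) * t) := by
          rw [mul_assoc, ← Real.exp_add]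
          ring_nf
  have h := h1.union h2
  rwa [Ioc_union_Ioi_eq_Ioi zero_le_one] at h

end AUX

open scoped FourierTransform

/-- Normalization at infinity `F^T(∞) = 1`: along any horizontal line `Im θ = y` inside
the strip `0 < y < 2π`, `F^T(x + iy) → 1` as `x → +∞`. -/
theorem FT_normalized_at_infinity (N : ℕ) (hN : 2 ≤ N) (B : ℝ) (hB0 : 0 < B) (hB2 : B < 2)
    (y : ℝ) (hy0 : 0 < y) (hy2 : y < 2 * Real.pi) :
    Tendsto (fun x : ℝ => FT N B ((x : ℂ) + (y : ℂ) * I)) atTop (𝓝 1) := by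
  have hπ : (0:ℝ) < Real.pi := Real.pi_pos
  set a : ℝ := 1 - y / Real.pi with ha
  have hc : |a| < 1 := by
    rw [abs_lt]
    constructor
    · have h2 : y / Real.pi < 2 := by rw [div_lt_iff₀ hπ]; linarith
      rw [ha]; linarith
    · have h1 : 0 < y / Real.pi := div_pos hy0 hπ
      rw [ha]; linarith
  have hc' : |(-a)| < 1 := by rwa [abs_neg]
  have hp : IntegrableOn (fun t => gR N B t * Real.exp (t * a)) (Set.Ioi 0) :=
    integrable_gR_exp hN hB0 hB2 hc
  have hm : IntegrableOn (fun t => gR N B t * Real.exp (-(t * a))) (Set.Ioi 0) := by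
    have h := integrable_gR_exp hN hB0 hB2 hc'
    simpa [mul_neg] using h
  set Fp : ℝ → ℂ := (Set.Ioi (0:ℝ)).indicator
    (fun t => ((gR N B t * Real.exp (t * a) : ℝ) : ℂ)) with hFp
  set Fm : ℝ → ℂ := (Set.Ioi (0:ℝ)).indicator
    (fun t => ((gR N B t * Real.exp (-(t * a)) : ℝ) : ℂ)) with hFm
  have hwp : Tendsto (fun x : ℝ => -(x / (2 * Real.pi ^ 2))) atTop (cocompact ℝ) := by
    rw [cocompact_eq_atBot_atTop]
    apply Tendsto.mono_right _ le_sup_left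
    exact tendsto_neg_atTop_atBot.comp (tendsto_id.atTop_div_const (by positivity))
  have hwm : Tendsto (fun x : ℝ => x / (2 * Real.pi ^ 2)) atTop (cocompact ℝ) := by
    rw [cocompact_eq_atBot_atTop]
    exact Tendsto.mono_right (tendsto_id.atTop_div_const (by positivity)) le_sup_right
  have RLp := (Real.tendsto_integral_exp_smul_cocompact Fp).comp hwp
  have RLm := (Real.tendsto_integral_exp_smul_cocompact Fm).comp hwm
  have key : ∀ x : ℝ, (∫ t in Set.Ioi (0:ℝ), fT N B ((x:ℂ) + (y:ℂ) * I) t)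
      = (∫ v : ℝ, 𝐞 (v * (x / (2 * Real.pi ^ 2))) • Fp v) / 2
        + (∫ v : ℝ, 𝐞 (-(v * (x / (2 * Real.pi ^ 2)))) • Fm v) / 2 := by
    intro x
    have ep : ∀ v : ℝ, 𝐞 (v * (x / (2 * Real.pi ^ 2))) • Fp v
        = (Set.Ioi (0:ℝ)).indicator
            (fun t => ((gR N B t * Real.exp (t * a) : ℝ) : ℂ)
              * Complex.exp (((t * (x / Real.pi) : ℝ) : ℂ) * I)) v := by
      intro v
      have hchar : ((𝐞 (v * (x / (2 * Real.pi ^ 2))) : Circle) : ℂ)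
          = Complex.exp (((v * (x / Real.pi) : ℝ) : ℂ) * I) := by
        rw [Real.fourierChar_apply]
        congr 1
        push_cast
        have hπ' : (Real.pi : ℂ) ≠ 0 := Complex.ofReal_ne_zero.mpr Real.pi_ne_zero
        field_simp
      rw [Circle.smul_def, hchar, smul_eq_mul]
      by_cases hv : v ∈ Set.Ioi (0:ℝ)
      · rw [hFp]
        rw [Set.indicator_of_mem hv, Set.indicator_of_mem hv]
        ring
      · rw [hFp, Set.indicator_of_notMem hv, Set.indicator_of_notMem hv, mul_zero]
    have em : ∀ v : ℝ, 𝐞 (-(v * (x / (2 * Real.pi ^ 2)))) • Fm v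
        = (Set.Ioi (0:ℝ)).indicator
            (fun t => ((gR N B t * Real.exp (-(t * a)) : ℝ) : ℂ)
              * Complex.exp (-(((t * (x / Real.pi) : ℝ) : ℂ) * I))) v := by
      intro v
      have hchar : ((𝐞 (-(v * (x / (2 * Real.pi ^ 2)))) : Circle) : ℂ)
          = Complex.exp (-(((v * (x / Real.pi) : ℝ) : ℂ) * I)) := by
        rw [Real.fourierChar_apply]
        congr 1
        push_cast
        have hπ' : (Real.pi : ℂ) ≠ 0 := Complex.ofReal_ne_zero.mpr Real.pi_ne_zero
        field_simp
      rw [Circle.smul_def, hchar, smul_eq_mul]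
      by_cases hv : v ∈ Set.Ioi (0:ℝ)
      · rw [hFm]
        rw [Set.indicator_of_mem hv, Set.indicator_of_mem hv]
        ring
      · rw [hFm, Set.indicator_of_notMem hv, Set.indicator_of_notMem hv, mul_zero]
    have hip : IntegrableOn (fun t : ℝ => ((gR N B t * Real.exp (t * a) : ℝ) : ℂ)
        * Complex.exp (((t * (x / Real.pi) : ℝ) : ℂ) * I)) (Set.Ioi 0) := by
      apply Integrable.mono' hp.abs
      · exact (Complex.continuous_ofReal.comp_aestronglyMeasurable
          hp.aestronglyMeasurable).mul (Continuous.aestronglyMeasurable (by fun_prop))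
      · filter_upwards with t
        rw [norm_mul, Complex.norm_real]
        rw [Complex.norm_exp]
        simp [Real.norm_eq_abs, abs_mul, Real.abs_exp]
    have him : IntegrableOn (fun t : ℝ => ((gR N B t * Real.exp (-(t * a)) : ℝ) : ℂ)
        * Complex.exp (-(((t * (x / Real.pi) : ℝ) : ℂ) * I))) (Set.Ioi 0) := by
      apply Integrable.mono' hm.abs
      · exact (Complex.continuous_ofReal.comp_aestronglyMeasurable
          hm.aestronglyMeasurable).mul (Continuous.aestronglyMeasurable (by fun_prop))
      · filter_upwards with t
        rw [norm_mul, Complex.norm_real]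
        rw [Complex.norm_exp]
        simp [Real.norm_eq_abs, abs_mul, Real.abs_exp]
    have e1 : (∫ v : ℝ, 𝐞 (v * (x / (2 * Real.pi ^ 2))) • Fp v)
        = ∫ t in Set.Ioi (0:ℝ), ((gR N B t * Real.exp (t * a) : ℝ) : ℂ)
            * Complex.exp (((t * (x / Real.pi) : ℝ) : ℂ) * I) := by
      rw [integral_congr_ae (Eventually.of_forall ep), integral_indicator measurableSet_Ioi]
    have e2 : (∫ v : ℝ, 𝐞 (-(v * (x / (2 * Real.pi ^ 2)))) • Fm v)
        = ∫ t in Set.Ioi (0:ℝ), ((gR N B t * Real.exp (-(t * a)) : ℝ) : ℂ)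
            * Complex.exp (-(((t * (x / Real.pi) : ℝ) : ℂ) * I)) := by
      rw [integral_congr_ae (Eventually.of_forall em), integral_indicator measurableSet_Ioi]
    rw [e1, e2]
    calc (∫ t in Set.Ioi (0:ℝ), fT N B ((x:ℂ) + (y:ℂ) * I) t)
        = ∫ t in Set.Ioi (0:ℝ),
            (((gR N B t * Real.exp (t * a) : ℝ) : ℂ)
                * Complex.exp (((t * (x / Real.pi) : ℝ) : ℂ) * I) / 2
              + ((gR N B t * Real.exp (-(t * a)) : ℝ) : ℂ)
                * Complex.exp (-(((t * (x / Real.pi) : ℝ) : ℂ) * I)) / 2) := by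
          apply setIntegral_congr_fun measurableSet_Ioi
          intro t _
          exact fT_key N B x y t
      _ = (∫ t in Set.Ioi (0:ℝ), ((gR N B t * Real.exp (t * a) : ℝ) : ℂ)
              * Complex.exp (((t * (x / Real.pi) : ℝ) : ℂ) * I)) / 2
          + (∫ t in Set.Ioi (0:ℝ), ((gR N B t * Real.exp (-(t * a)) : ℝ) : ℂ)
              * Complex.exp (-(((t * (x / Real.pi) : ℝ) : ℂ) * I))) / 2 := by
          rw [integral_add (hip.div_const 2) (him.div_const 2), integral_div, integral_div]
  have hlim : Tendsto (fun x : ℝ => ∫ t in Set.Ioi (0:ℝ), fT N B ((x:ℂ) + (y:ℂ) * I) t)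
      atTop (𝓝 0) := by
    have h := (RLp.div_const 2).add (RLm.div_const 2)
    norm_num at h
    exact h.congr (fun x => (key x).symm)
  have hfinal : Tendsto (fun x : ℝ => FT N B ((x:ℂ) + (y:ℂ) * I)) atTop
      (𝓝 (Complex.exp 0)) := by
    unfold FT
    exact (Complex.continuous_exp.tendsto 0).comp hlim
  simpa using hfinal
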